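/- arXiv:2007.10320 — 3 statements merged into one kernel-verified Lean document; each statement's English description precedes it below -/
import Mathlib

section
/- Let H' be an r-partite r-graph (r ≥ 3) with nonempty parts U_1,...,U_r on at most n vertices, with no isolated vertices, such that |U_1| ≥ |U_i| for all i, and such that every pair (u_1,u_2) ∈ U_1×U_2 contained in a common edge has codegree at most 2Δ_{12} and at least Δ_{12}/D (for some D ≥ 1). Suppose e(H') ≥ α K n^{r-1}/L for positive reals α, K, L. Then either the shadow ∂_{12} (the set of pairs in U_1×U_2 contained in some edge) satisfies |∂_{12}| ≥ √K |U_1|^{3/2}, or the shadow ∂_{13} satisfies |∂_{13}| ≥ (α √K n^2) / (2 D L |U_1|^{1/2}). -/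
open Finset

/-- codegree of a pair of vertices in a hypergraph -/
def codeg {V : Type*} [DecidableEq V] (H : Finset (Finset V)) (u v : V) : ℕ :=
  (H.filter (fun f => u ∈ f ∧ v ∈ f)).card

/-- the shadow ∂_{ij}: pairs of vertices in parts i and j lying in a common edge -/
def shadowPairs {V : Type*} [Fintype V] [DecidableEq V] {r : ℕ}
    (part : V → Fin r) (H : Finset (Finset V)) (i j : Fin r) : Finset (V × V) :=
  Finset.univ.filter (fun p => part p.1 = i ∧ part p.2 = j ∧ ∃ e ∈ H, p.1 ∈ e ∧ p.2 ∈ e)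

lemma exists_part_mem {V : Type*} [DecidableEq V] {r : ℕ}
    (part : V → Fin r) (e : Finset V) (hcard : e.card = r)
    (hinj : ∀ u ∈ e, ∀ v ∈ e, u ≠ v → part u ≠ part v) (i : Fin r) :
    ∃ v ∈ e, part v = i := by
  have hinj' : Set.InjOn part e := by
    intro a ha b hb hab
    by_contra h
    exact hinj a ha b hb h hab
  have h2 : e.image part = Finset.univ := by
    apply Finset.eq_univ_of_card
    rw [Finset.card_image_of_injOn hinj', hcard]
    simp
  have : i ∈ e.image part := by rw [h2]; exact mem_univ i
  simpa using this

lemma triple_deg_le {V : Type*} [Fintype V] [DecidableEq V] {r n : ℕ}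
    (hV : Fintype.card V ≤ n)
    (H' : Finset (Finset V)) (hcard : ∀ e ∈ H', e.card = r)
    (u1 u2 u3 : V) (h12 : u1 ≠ u2) (h13 : u1 ≠ u3) (h23 : u2 ≠ u3) :
    (H'.filter (fun f => u1 ∈ f ∧ u2 ∈ f ∧ u3 ∈ f)).card ≤ n ^ (r - 3) := by
  set s : Finset V := {u1, u2, u3} with hs_def
  have hs : s.card = 3 := by
    rw [hs_def, card_insert_of_notMem (by simp [h12, h13]),
      card_insert_of_notMem (by simp [h23]), card_singleton]
  have hsub : ∀ f ∈ H'.filter (fun f => u1 ∈ f ∧ u2 ∈ f ∧ u3 ∈ f), s ⊆ f := by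
    intro f hf
    simp only [mem_filter] at hf
    intro x hx
    simp only [hs_def, mem_insert, mem_singleton] at hx
    rcases hx with rfl | rfl | rfl <;> tauto
  have key : (H'.filter (fun f => u1 ∈ f ∧ u2 ∈ f ∧ u3 ∈ f)).card
      ≤ ((Finset.univ : Finset V).powersetCard (r - 3)).card := by
    apply Finset.card_le_card_of_injOn (fun f => f \ s)
    · intro f hf
      rw [Finset.mem_coe, Finset.mem_powersetCard]
      refine ⟨subset_univ _, ?_⟩
      rw [card_sdiff_of_subset (hsub f hf), hcard f (mem_filter.1 hf).1, hs]
    · intro f hf g hg hfg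
      have hfg' : f \ s = g \ s := hfg
      rw [← sdiff_union_of_subset (hsub f hf), ← sdiff_union_of_subset (hsub g hg), hfg']
  calc (H'.filter (fun f => u1 ∈ f ∧ u2 ∈ f ∧ u3 ∈ f)).card
      ≤ ((Finset.univ : Finset V).powersetCard (r - 3)).card := key
    _ = (Fintype.card V).choose (r - 3) := by
        rw [Finset.card_powersetCard, Finset.card_univ]
    _ ≤ (Fintype.card V) ^ (r - 3) := Nat.choose_le_pow _ _
    _ ≤ n ^ (r - 3) := Nat.pow_le_pow_left hV _

/-- either the shadow ∂₁₂ is large, or the shadow ∂₁₃ is large.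
Parts U₁, U₂, U₃ are the fibres of `part` over `i1`, `i2`, `i3`. -/
theorem shadow_dichotomy (r n : ℕ) (hr : 3 ≤ r)
    {V : Type*} [Fintype V] [DecidableEq V] (hV : Fintype.card V ≤ n)
    (part : V → Fin r) (i1 i2 i3 : Fin r) (hi12 : i1 ≠ i2) (hi13 : i1 ≠ i3) (hi23 : i2 ≠ i3)
    (H' : Finset (Finset V)) (Δ D α K L : ℝ)
    (hD : 1 ≤ D) (hα : 0 < α) (hK : 0 < K) (hL : 0 < L)
    (hpartite : ∀ e ∈ H', e.card = r ∧ ∀ u ∈ e, ∀ v ∈ e, u ≠ v → part u ≠ part v)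
    (hparts : ∀ i : Fin r, ∃ v : V, part v = i)
    (hnoiso : ∀ v : V, ∃ e ∈ H', v ∈ e)
    (hU1max : ∀ i : Fin r, (Finset.univ.filter (fun v : V => part v = i)).card ≤
        (Finset.univ.filter (fun v : V => part v = i1)).card)
    (hcodeg : ∀ u v : V, part u = i1 → part v = i2 → (∃ e ∈ H', u ∈ e ∧ v ∈ e) →
      Δ / D ≤ (codeg H' u v : ℝ) ∧ (codeg H' u v : ℝ) ≤ 2 * Δ)
    (he : α * K * (n : ℝ) ^ (r - 1) / L ≤ (H'.card : ℝ)) :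
    Real.sqrt K * ((Finset.univ.filter (fun v : V => part v = i1)).card : ℝ) *
        Real.sqrt ((Finset.univ.filter (fun v : V => part v = i1)).card) ≤
        ((shadowPairs part H' i1 i2).card : ℝ) ∨
      α * Real.sqrt K * (n : ℝ) ^ 2 /
        (2 * D * L * Real.sqrt ((Finset.univ.filter (fun v : V => part v = i1)).card)) ≤
        ((shadowPairs part H' i1 i3).card : ℝ) := by
  classical
  set U1 := Finset.univ.filter (fun v : V => part v = i1) with hU1
  obtain ⟨v1, hv1⟩ := hparts i1
  have hVpos : 0 < Fintype.card V := Fintype.card_pos_iff.2 ⟨v1⟩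
  have hn1 : 1 ≤ n := le_trans hVpos hV
  have hnR : (1:ℝ) ≤ (n:ℝ) := by exact_mod_cast hn1
  have hu1 : 1 ≤ U1.card := card_pos.2 ⟨v1, by simp [hU1, hv1]⟩
  set u : ℝ := (U1.card : ℝ) with hu_def
  have hu0 : (1:ℝ) ≤ u := by rw [hu_def]; exact_mod_cast hu1
  set a := Real.sqrt K with ha_def
  set b := Real.sqrt u with hb_def
  have ha : a * a = K := Real.mul_self_sqrt hK.le
  have hapos : 0 < a := Real.sqrt_pos.2 hK
  have hb : b * b = u := Real.mul_self_sqrt (by linarith)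
  have hbpos : 0 < b := Real.sqrt_pos.2 (by linarith)
  set m : ℝ := (n:ℝ) ^ (r-3) with hm_def
  have hmpos : 0 < m := pow_pos (by linarith) _
  have hDpos : (0:ℝ) < D := by linarith
  -- Δ is positive
  obtain ⟨e0, he0, hv1e0⟩ := hnoiso v1
  obtain ⟨y0, hy0, hy0p⟩ := exists_part_mem part e0 (hpartite e0 he0).1 (hpartite e0 he0).2 i2
  have hcd0 : 1 ≤ codeg H' v1 y0 := by
    apply card_pos.2 ⟨e0, ?_⟩
    simp [he0, hv1e0, hy0]
  have hΔpos : 0 < Δ := by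
    have h1 := (hcodeg v1 y0 hv1 hy0p ⟨e0, he0, hv1e0, hy0⟩).2
    have h2 : (1:ℝ) ≤ (codeg H' v1 y0 : ℝ) := by exact_mod_cast hcd0
    linarith
  -- Step B/C : e(H') ≤ |∂12| * 2Δ
  have hB : (H'.card : ℝ) ≤ ((shadowPairs part H' i1 i2).card : ℝ) * (2*Δ) := by
    have hsub : H' ⊆ (shadowPairs part H' i1 i2).biUnion
        (fun p => H'.filter (fun f => p.1 ∈ f ∧ p.2 ∈ f)) := by
      intro e he'
      obtain ⟨x, hx, hxp⟩ := exists_part_mem part e (hpartite e he').1 (hpartite e he').2 i1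
      obtain ⟨y, hy, hyp⟩ := exists_part_mem part e (hpartite e he').1 (hpartite e he').2 i2
      refine mem_biUnion.2 ⟨(x,y), ?_, ?_⟩
      · simp only [shadowPairs, mem_filter, mem_univ, true_and]
        exact ⟨hxp, hyp, e, he', hx, hy⟩
      · simp [he', hx, hy]
    have h1 : H'.card ≤ ∑ p ∈ shadowPairs part H' i1 i2, codeg H' p.1 p.2 :=
      le_trans (card_le_card hsub) card_biUnion_le
    calc (H'.card:ℝ) ≤ ∑ p ∈ shadowPairs part H' i1 i2, (codeg H' p.1 p.2 : ℝ) := by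
          exact_mod_cast h1
      _ ≤ ∑ _p ∈ shadowPairs part H' i1 i2, 2*Δ := by
          refine sum_le_sum fun p hp => ?_
          simp only [shadowPairs, mem_filter, mem_univ, true_and] at hp
          exact (hcodeg p.1 p.2 hp.1 hp.2.1 hp.2.2).2
      _ = ((shadowPairs part H' i1 i2).card : ℝ) * (2*Δ) := by
          rw [sum_const, nsmul_eq_mul]
  -- Step D : lower bound on |∂13|
  set S : V → Finset V := fun w =>
    Finset.univ.filter (fun v => (w,v) ∈ shadowPairs part H' i1 i3) with hS_def
  have hD1 : ∑ w ∈ U1, (S w).card ≤ (shadowPairs part H' i1 i3).card := by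
    have hinj : ∀ w : V, Function.Injective (fun v : V => (w, v)) := by
      intro w x y hxy
      simpa using congrArg Prod.snd hxy
    calc ∑ w ∈ U1, (S w).card
        = ∑ w ∈ U1, ((S w).image (fun v => (w,v))).card := by
          exact sum_congr rfl fun w _ => (card_image_of_injective _ (hinj w)).symm
      _ = (U1.biUnion (fun w => (S w).image (fun v => (w,v)))).card := by
          refine (card_biUnion ?_).symm
          intro x hx y hy hxy
          simp only [disjoint_left]
          intro p hp hq
          obtain ⟨px, _, rfl⟩ := mem_image.1 hp
          obtain ⟨qx, _, hq'⟩ := mem_image.1 hq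
          exact hxy (congrArg Prod.fst hq').symm
      _ ≤ (shadowPairs part H' i1 i3).card := by
          apply card_le_card
          intro p hp
          obtain ⟨w, _, hp2⟩ := mem_biUnion.1 hp
          obtain ⟨v, hv, rfl⟩ := mem_image.1 hp2
          simpa [hS_def] using (mem_filter.1 hv).2
  have hD2 : ∀ w ∈ U1, Δ / (D * m) ≤ ((S w).card : ℝ) := by
    intro w hw
    have hwp : part w = i1 := by simpa [hU1] using hw
    obtain ⟨e, he, hwe⟩ := hnoiso w
    obtain ⟨y, hy, hyp⟩ := exists_part_mem part e (hpartite e he).1 (hpartite e he).2 i2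
    have hwy : w ≠ y := fun h => hi12 (by rw [← hwp, h, hyp])
    have hlow := (hcodeg w y hwp hyp ⟨e, he, hwe, hy⟩).1
    -- codeg w y ≤ |S w| * n^{r-3}
    have hcount : codeg H' w y ≤ (S w).card * n ^ (r-3) := by
      have hsub : H'.filter (fun f => w ∈ f ∧ y ∈ f) ⊆ (S w).biUnion
          (fun z => H'.filter (fun f => w ∈ f ∧ y ∈ f ∧ z ∈ f)) := by
        intro f hf
        have hf' := mem_filter.1 hf
        obtain ⟨z, hz, hzp⟩ :=
          exists_part_mem part f (hpartite f hf'.1).1 (hpartite f hf'.1).2 i3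
        refine mem_biUnion.2 ⟨z, ?_, ?_⟩
        · simp only [hS_def, shadowPairs, mem_filter, mem_univ, true_and]
          exact ⟨hwp, hzp, f, hf'.1, hf'.2.1, hz⟩
        · exact mem_filter.2 ⟨hf'.1, hf'.2.1, hf'.2.2, hz⟩
      calc codeg H' w y ≤ ∑ z ∈ S w, (H'.filter (fun f => w ∈ f ∧ y ∈ f ∧ z ∈ f)).card :=
            le_trans (card_le_card hsub) card_biUnion_le
        _ ≤ ∑ _z ∈ S w, n ^ (r-3) := by
            refine sum_le_sum fun z hz => ?_
            have hzp : part z = i3 := by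
              have := (mem_filter.1 hz).2
              simp only [shadowPairs, mem_filter, mem_univ, true_and] at this
              exact this.2.1
            exact triple_deg_le hV H' (fun e' he' => (hpartite e' he').1) w y z hwy
              (fun h => hi13 (by rw [← hwp, h, hzp]))
              (fun h => hi23 (by rw [← hyp, h, hzp]))
        _ = (S w).card * n ^ (r-3) := by rw [sum_const, smul_eq_mul]
    have hcR : (codeg H' w y : ℝ) ≤ ((S w).card : ℝ) * m := by
      rw [hm_def]; exact_mod_cast hcount
    rw [div_le_iff₀ (by positivity)]
    rw [div_le_iff₀ hDpos] at hlow
    nlinarith [hlow, hcR]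
  have hsum : u * (Δ / (D * m)) ≤ ((shadowPairs part H' i1 i3).card : ℝ) := by
    calc u * (Δ / (D * m)) = ∑ _w ∈ U1, Δ / (D * m) := by
          rw [sum_const, nsmul_eq_mul]
      _ ≤ ∑ w ∈ U1, ((S w).card : ℝ) := sum_le_sum hD2
      _ = ((∑ w ∈ U1, (S w).card : ℕ) : ℝ) := by push_cast; ring
      _ ≤ ((shadowPairs part H' i1 i3).card : ℝ) := by exact_mod_cast hD1
  -- conclude
  by_cases hcase : a * u * b ≤ ((shadowPairs part H' i1 i2).card : ℝ)
  · exact Or.inl hcase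
  right
  have hP12 : ((shadowPairs part H' i1 i2).card : ℝ) ≤ a * u * b := (not_le.1 hcase).le
  have hpow : ((n:ℝ)) ^ (r-1) = m * (n:ℝ)^2 := by
    rw [hm_def, ← pow_add]
    congr 1
    omega
  have hchain : α * K * (m * (n:ℝ)^2) / L ≤ (a * u * b) * (2*Δ) := by
    rw [← hpow]
    refine le_trans (le_trans he hB) ?_
    have h2Δ : (0:ℝ) < 2*Δ := by linarith
    exact mul_le_mul_of_nonneg_right hP12 h2Δ.le
  have hΔlb' : α * (a*a) * m * (n:ℝ)^2 ≤ Δ * (2 * L * a * u * b) := by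
    rw [div_le_iff₀ hL, ← ha] at hchain
    calc α * (a*a) * m * (n:ℝ)^2 = α * (a*a) * (m * (n:ℝ)^2) := by ring
      _ ≤ (a * u * b) * (2*Δ) * L := hchain
      _ = Δ * (2 * L * a * u * b) := by ring
  have hfinal : α * a * (n:ℝ)^2 / (2 * D * L * b) ≤ u * (Δ / (D * m)) := by
    rw [mul_div_assoc']
    rw [div_le_div_iff₀ (by positivity) (by positivity)]
    have h := mul_le_mul_of_nonneg_left hΔlb' hDpos.le
    have h2 : a * (α * a * (n:ℝ)^2 * (D * m)) ≤ a * (u * Δ * (2 * D * L * b)) := by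
      calc a * (α * a * (n:ℝ)^2 * (D * m)) = D * (α * (a*a) * m * (n:ℝ)^2) := by ring
        _ ≤ D * (Δ * (2 * L * a * u * b)) := h
        _ = a * (u * Δ * (2 * D * L * b)) := by ring
    exact le_of_mul_le_mul_left h2 hapos
  exact le_trans hfinal hsum
end

section
/- For every n ≥ 8 and every integer t with 1 < t ≤ √(n/2), there exists a partial (n,t,2)-Steiner system with at least n²/(4t²) blocks. -/
open Finset

private lemma encode_inj {q a b c d : ℕ} (hq : 0 < q) (hb : b < q) (hd : d < q)
    (h : a * q + b = c * q + d) : a = c ∧ b = d := by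
  have h1 : (a * q + b) / q = a := by
    rw [mul_comm, Nat.mul_add_div hq, Nat.div_eq_of_lt hb, add_zero]
  have h2 : (c * q + d) / q = c := by
    rw [mul_comm, Nat.mul_add_div hq, Nat.div_eq_of_lt hd, add_zero]
  have hac : a = c := by rw [← h1, ← h2, h]
  subst hac
  exact ⟨rfl, by omega⟩

/-- for every n ≥ 8 and 1 < t ≤ √(n/2) (i.e. 2t² ≤ n), there is a partial
(n,t,2)-Steiner system with at least n²/(4t²) blocks. -/
theorem partial_steiner_exists (n t : ℕ) (hn : 8 ≤ n) (ht1 : 1 < t) (ht : 2 * t ^ 2 ≤ n) :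
    ∃ S : Finset (Finset (Fin n)),
      (∀ b ∈ S, b.card = t) ∧
      (∀ u v : Fin n, u ≠ v → (S.filter (fun b => u ∈ b ∧ v ∈ b)).card ≤ 1) ∧
      n ^ 2 ≤ 4 * t ^ 2 * S.card := by
  have ht0 : 0 < t := by omega
  set m := n / (2 * t) with hm
  have hmt : t ≤ m := (Nat.le_div_iff_mul_le (by omega)).2 (by nlinarith)
  obtain ⟨q, hq, hmq, hq2m⟩ := Nat.exists_prime_lt_and_le_two_mul m (by omega)
  haveI : Fact q.Prime := ⟨hq⟩
  have hq0 : 0 < q := hq.pos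
  have htq : t < q := lt_of_le_of_lt hmt hmq
  have hdm : m * (2 * t) ≤ n := Nat.div_mul_le_self n (2 * t)
  have hqt_n : q * t ≤ n := by nlinarith
  have hn_lt : n < 2 * t * q := by
    have h1 : n % (2 * t) < 2 * t := Nat.mod_lt _ (by omega)
    have h2 : 2 * t * m + n % (2 * t) = n := Nat.div_add_mod n (2 * t)
    nlinarith
  -- encoding of points
  have hval : ∀ y : ZMod q, y.val < q := fun y => ZMod.val_lt y
  let pt : Fin t → ZMod q → Fin n := fun i y =>
    ⟨i.val * q + y.val, by
      have h1 : i.val * q + y.val < (i.val + 1) * q := by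
        have := hval y; nlinarith
      have h2 : (i.val + 1) * q ≤ t * q := Nat.mul_le_mul_right q i.isLt
      have : t * q ≤ n := by nlinarith
      omega⟩
  have pt_inj : ∀ (i j : Fin t) (y z : ZMod q), pt i y = pt j z → i = j ∧ y = z := by
    intro i j y z h
    have h' : i.val * q + y.val = j.val * q + z.val := congrArg Fin.val h
    obtain ⟨h1, h2⟩ := encode_inj hq0 (hval y) (hval z) h'
    exact ⟨Fin.ext h1, ZMod.val_injective q h2⟩
  let blk : ZMod q → ZMod q → Finset (Fin n) := fun a b =>
    Finset.image (fun i : Fin t => pt i (a * (i.val : ZMod q) + b)) Finset.univ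
  -- key lemma
  have key : ∀ (u v : Fin n), u ≠ v → ∀ a₁ b₁ a₂ b₂ : ZMod q,
      u ∈ blk a₁ b₁ → v ∈ blk a₁ b₁ → u ∈ blk a₂ b₂ → v ∈ blk a₂ b₂ →
      a₁ = a₂ ∧ b₁ = b₂ := by
    intro u v huv a₁ b₁ a₂ b₂ hu1 hv1 hu2 hv2
    simp only [blk, Finset.mem_image, Finset.mem_univ, true_and] at hu1 hv1 hu2 hv2
    obtain ⟨i, hi⟩ := hu1
    obtain ⟨j, hj⟩ := hv1
    obtain ⟨i', hi'⟩ := hu2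
    obtain ⟨j', hj'⟩ := hv2
    obtain ⟨hii', hyi⟩ := pt_inj _ _ _ _ (hi.trans hi'.symm)
    obtain ⟨hjj', hyj⟩ := pt_inj _ _ _ _ (hj.trans hj'.symm)
    subst hii'; subst hjj'
    have hij : i ≠ j := by
      rintro rfl
      exact huv (hi.symm.trans hj)
    have hijz : (i.val : ZMod q) ≠ (j.val : ZMod q) := by
      intro hc
      apply hij
      have hiv : ((i.val : ZMod q)).val = i.val := ZMod.val_natCast_of_lt (lt_trans i.isLt htq)
      have hjv : ((j.val : ZMod q)).val = j.val := ZMod.val_natCast_of_lt (lt_trans j.isLt htq)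
      exact Fin.ext (by rw [← hiv, ← hjv, hc])
    set x : ZMod q := (i.val : ZMod q)
    set y : ZMod q := (j.val : ZMod q)
    have e1 : a₁ * x + b₁ = a₂ * x + b₂ := hyi
    have e2 : a₁ * y + b₁ = a₂ * y + b₂ := hyj
    have e3 : (a₁ - a₂) * (x - y) = 0 := by ring_nf; linear_combination e1 - e2
    have ha : a₁ = a₂ := by
      rcases mul_eq_zero.1 e3 with h | h
      · exact sub_eq_zero.1 h
      · exact absurd (sub_eq_zero.1 h) hijz
    refine ⟨ha, ?_⟩
    have := e1
    rw [ha] at this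
    exact add_left_cancel (by linear_combination this)
  refine ⟨Finset.image (fun p : ZMod q × ZMod q => blk p.1 p.2) Finset.univ, ?_, ?_, ?_⟩
  · intro b hb
    simp only [Finset.mem_image, Finset.mem_univ, true_and] at hb
    obtain ⟨⟨a, c⟩, rfl⟩ := hb
    rw [Finset.card_image_of_injOn, Finset.card_univ, Fintype.card_fin]
    intro i _ j _ h
    exact (pt_inj _ _ _ _ h).1
  · intro u v huv
    rw [Finset.card_le_one]
    intro B hB C hC
    simp only [Finset.mem_filter, Finset.mem_image, Finset.mem_univ, true_and] at hB hC
    obtain ⟨⟨⟨a₁, b₁⟩, rfl⟩, hu1, hv1⟩ := hB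
    obtain ⟨⟨⟨a₂, b₂⟩, rfl⟩, hu2, hv2⟩ := hC
    obtain ⟨h1, h2⟩ := key u v huv a₁ b₁ a₂ b₂ hu1 hv1 hu2 hv2
    rw [h1, h2]
  · have hcard : (Finset.image (fun p : ZMod q × ZMod q => blk p.1 p.2) Finset.univ).card
        = q * q := by
      rw [Finset.card_image_of_injOn, Finset.card_univ, Fintype.card_prod, ZMod.card]
      intro p _ p' _ h
      have h' : blk p.1 p.2 = blk p'.1 p'.2 := h
      have h0 : pt ⟨0, by omega⟩ (p.1 * ((⟨0, by omega⟩ : Fin t).val : ZMod q) + p.2) ∈ blk p.1 p.2 :=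
        Finset.mem_image_of_mem _ (Finset.mem_univ _)
      have h1 : pt ⟨1, by omega⟩ (p.1 * ((⟨1, by omega⟩ : Fin t).val : ZMod q) + p.2) ∈ blk p.1 p.2 :=
        Finset.mem_image_of_mem _ (Finset.mem_univ _)
      have h0' : pt ⟨0, by omega⟩ (p.1 * ((⟨0, by omega⟩ : Fin t).val : ZMod q) + p.2) ∈ blk p'.1 p'.2 := by
        rw [← h']; exact h0
      have h1' : pt ⟨1, by omega⟩ (p.1 * ((⟨1, by omega⟩ : Fin t).val : ZMod q) + p.2) ∈ blk p'.1 p'.2 := by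
        rw [← h']; exact h1
      have hne : pt ⟨0, by omega⟩ (p.1 * ((⟨0, by omega⟩ : Fin t).val : ZMod q) + p.2)
          ≠ pt ⟨1, by omega⟩ (p.1 * ((⟨1, by omega⟩ : Fin t).val : ZMod q) + p.2) := by
        intro hc
        have := (pt_inj _ _ _ _ hc).1
        have := congrArg Fin.val this
        simp at this
      obtain ⟨ha, hb⟩ := key _ _ hne p.1 p.2 p'.1 p'.2 h0 h1 h0' h1'
      exact Prod.ext ha hb
    rw [hcard]
    nlinarith
end

section
/- Let H be a 3-uniform hypergraph of girth at least five (no Berge cycle of length ≤ 4). Form H(a) by replacing each vertex v with a set U_v of a new vertices and each edge {u,v,w} with a complete 3-partite 3-graph on U_u, U_v, U_w. Let G be any subgraph of H(a) that, for each original edge e of H, uses only a matching inside the blown-up copy K_{a,a,a}^{(3)}(e). Then G has girth at least five; in particular G contains no linear cycle C_4^{(3)}. -/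
open Finset

/-- a Berge cycle of length k in a hypergraph: distinct vertices v₁,…,v_k and distinct
edges e₁,…,e_k with v_i, v_{i+1} ∈ e_i (indices mod k) -/
def BergeCycle {V : Type*} [DecidableEq V] (G : Finset (Finset V)) (k : ℕ) : Prop :=
  ∃ (v : ZMod k → V) (e : ZMod k → Finset V),
    Function.Injective v ∧ Function.Injective e ∧ (∀ i, e i ∈ G) ∧
    ∀ i, v i ∈ e i ∧ v (i + 1) ∈ e i

/-- Two distinct vertices in two distinct common edges give a Berge 2-cycle. -/
lemma berge_two {V : Type*} [DecidableEq V] (H : Finset (Finset V)) (w1 w2 : V)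
    (f1 f2 : Finset V) (hw : w1 ≠ w2) (hf : f1 ≠ f2) (hf1 : f1 ∈ H) (hf2 : f2 ∈ H)
    (m11 : w1 ∈ f1) (m21 : w2 ∈ f1) (m22 : w2 ∈ f2) (m12 : w1 ∈ f2) :
    BergeCycle H 2 := by
  refine ⟨fun i => if i = 0 then w1 else w2, fun i => if i = 0 then f1 else f2, ?_, ?_, ?_, ?_⟩
  · intro i j hij
    have enum : ∀ x : ZMod 2, x = 0 ∨ x = 1 := by decide
    rcases enum i with rfl | rfl <;> rcases enum j with rfl | rfl <;> simp_all
  · intro i j hij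
    have enum : ∀ x : ZMod 2, x = 0 ∨ x = 1 := by decide
    rcases enum i with rfl | rfl <;> rcases enum j with rfl | rfl <;> simp_all
  · intro i
    dsimp only
    split <;> assumption
  · intro i
    have enum : ∀ x : ZMod 2, x = 0 ∨ x = 1 := by decide
    rcases enum i with rfl | rfl
    · exact ⟨m11, m21⟩
    · exact ⟨m22, m12⟩


/-- if H is a 3-graph of girth ≥ 5 and G is a subgraph of the a-blowup
H(a) using only a matching inside each blown-up block, then G has girth ≥ 5; in
particular G contains no linear cycle C₄^{(3)}. -/
theorem blowup_matching_girth {W : Type*} [Fintype W] [DecidableEq W]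
    (a : ℕ) (H : Finset (Finset W)) (hH3 : ∀ e ∈ H, e.card = 3)
    (hHgirth : ∀ k, 2 ≤ k → k ≤ 4 → ¬ BergeCycle H k)
    (G : Finset (Finset (W × Fin a)))
    (hsub : ∀ g ∈ G, g.card = 3 ∧ g.image Prod.fst ∈ H)
    (hmatch : ∀ g ∈ G, ∀ g' ∈ G, g ≠ g' → g.image Prod.fst = g'.image Prod.fst →
      Disjoint g g') :
    (∀ k, 2 ≤ k → k ≤ 4 → ¬ BergeCycle G k) ∧
      ¬ ∃ f : ZMod 4 → Finset (W × Fin a), (∀ i, f i ∈ G) ∧ Function.Injective f ∧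
        (∀ i, (f i ∩ f (i + 1)).card = 1) ∧ (∀ i, Disjoint (f i) (f (i + 2))) := by
  -- projection is injective on each edge of G
  have pinj : ∀ g ∈ G, ∀ x ∈ g, ∀ y ∈ g, x.1 = y.1 → x = y := by
    intro g hg x hx y hy hxy
    have h3 := (hsub g hg).1
    have himg : (g.image Prod.fst).card = 3 := hH3 _ (hsub g hg).2
    have hI : Set.InjOn (Prod.fst : W × Fin a → W) ↑g := Finset.card_image_iff.mp (by rw [himg, h3])
    exact hI (Finset.mem_coe.mpr hx) (Finset.mem_coe.mpr hy) hxy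
  -- distinct edges of G sharing a vertex have distinct projections
  have edist : ∀ g ∈ G, ∀ g' ∈ G, g ≠ g' → ∀ x, x ∈ g → x ∈ g' →
      g.image Prod.fst ≠ g'.image Prod.fst := by
    intro g hg g' hg' hne x hx hx' heq
    exact (Finset.disjoint_left.mp (hmatch g hg g' hg' hne heq) hx) hx'
  have main : ∀ k, 2 ≤ k → k ≤ 4 → ¬ BergeCycle G k := by
    intro k hk2 hk4
    interval_cases k
    -- k = 2
    · rintro ⟨v, e, hv, he, heG, hc⟩
      have hc' : ∀ i j : ZMod 2, j = i + 1 → v j ∈ e i := fun i j h => h ▸ (hc i).2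
      apply hHgirth 2 le_rfl (by norm_num)
      refine berge_two H (v 0).1 (v 1).1 ((e 0).image Prod.fst) ((e 1).image Prod.fst)
        ?_ ?_ ((hsub _ (heG 0)).2) ((hsub _ (heG 1)).2)
        (Finset.mem_image_of_mem _ (hc 0).1) (Finset.mem_image_of_mem _ (hc' 0 1 (by decide)))
        (Finset.mem_image_of_mem _ (hc 1).1) (Finset.mem_image_of_mem _ (hc' 1 0 (by decide)))
      · intro h
        have := pinj (e 0) (heG 0) _ (hc 0).1 _ (hc' 0 1 (by decide)) h
        exact absurd (hv this) (by decide)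
      · exact edist _ (heG 0) _ (heG 1) (fun h => absurd (he h) (by decide)) _
          (hc' 0 1 (by decide)) (hc 1).1
    -- k = 3
    · rintro ⟨v, e, hv, he, heG, hc⟩
      have hc' : ∀ i j : ZMod 3, j = i + 1 → v j ∈ e i := fun i j h => h ▸ (hc i).2
      apply hHgirth 3 (by norm_num) (by norm_num)
      refine ⟨fun i => (v i).1, fun i => (e i).image Prod.fst, ?_, ?_,
        fun i => (hsub _ (heG i)).2,
        fun i => ⟨Finset.mem_image_of_mem _ (hc i).1, Finset.mem_image_of_mem _ (hc i).2⟩⟩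
      · -- vertex injectivity: every pair of vertices shares an edge
        have key : ∀ i j : ZMod 3, ∀ m : ZMod 3, v i ∈ e m → v j ∈ e m →
            (v i).1 = (v j).1 → i = j := by
          intro i j m hi hj h
          exact hv (pinj (e m) (heG m) _ hi _ hj h)
        intro i j hij
        by_contra hne
        fin_cases i <;> fin_cases j <;>
          first
          | exact hne rfl
          | exact hne (key _ _ 0 (hc 0).1 (hc' 0 1 (by decide)) hij)
          | exact hne (key _ _ 0 (hc' 0 1 (by decide)) (hc 0).1 hij)
          | exact hne (key _ _ 1 (hc 1).1 (hc' 1 2 (by decide)) hij)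
          | exact hne (key _ _ 1 (hc' 1 2 (by decide)) (hc 1).1 hij)
          | exact hne (key _ _ 2 (hc 2).1 (hc' 2 0 (by decide)) hij)
          | exact hne (key _ _ 2 (hc' 2 0 (by decide)) (hc 2).1 hij)
      · -- edge injectivity: every pair of edges shares a vertex
        have key : ∀ i j : ZMod 3, ∀ x, x ∈ e i → x ∈ e j →
            (e i).image Prod.fst = (e j).image Prod.fst → i = j := by
          intro i j x hi hj h
          by_contra hne
          exact edist _ (heG i) _ (heG j) (fun hh => hne (he hh)) x hi hj h
        intro i j hij
        fin_cases i <;> fin_cases j <;>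
          first
          | rfl
          | exact key _ _ (v 1) (hc' 0 1 (by decide)) (hc 1).1 hij
          | exact key _ _ (v 1) (hc 1).1 (hc' 0 1 (by decide)) hij
          | exact key _ _ (v 2) (hc' 1 2 (by decide)) (hc 2).1 hij
          | exact key _ _ (v 2) (hc 2).1 (hc' 1 2 (by decide)) hij
          | exact key _ _ (v 0) (hc' 2 0 (by decide)) (hc 0).1 hij
          | exact key _ _ (v 0) (hc 0).1 (hc' 2 0 (by decide)) hij
    -- k = 4
    · rintro ⟨v, e, hv, he, heG, hc⟩
      have hc' : ∀ i j : ZMod 4, j = i + 1 → v j ∈ e i := fun i j h => h ▸ (hc i).2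
      have hne4 : ∀ i : ZMod 4, i ≠ i + 1 := by decide
      -- consecutive projected vertices are distinct
      have A : ∀ i j : ZMod 4, j = i + 1 → (v i).1 ≠ (v j).1 := by
        intro i j hj h
        have := pinj (e i) (heG i) _ (hc i).1 _ (hc' i j hj) h
        exact hne4 i (hj ▸ hv this)
      -- consecutive projected edges are distinct
      have B : ∀ i j : ZMod 4, j = i + 1 →
          (e i).image Prod.fst ≠ (e j).image Prod.fst := by
        intro i j hj
        exact edist _ (heG i) _ (heG j)
          (fun h => hne4 i (hj ▸ he h)) _ (hc' i j hj) (hj ▸ (hc j).1)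
      -- opposite projected vertices are distinct
      have C02 : (v 0).1 ≠ (v 2).1 := by
        intro h
        apply hHgirth 2 le_rfl (by norm_num)
        refine berge_two H (v 0).1 (v 1).1 ((e 0).image Prod.fst) ((e 1).image Prod.fst)
          (A 0 1 (by decide)) (B 0 1 (by decide)) ((hsub _ (heG 0)).2) ((hsub _ (heG 1)).2)
          (Finset.mem_image_of_mem _ (hc 0).1) (Finset.mem_image_of_mem _ (hc' 0 1 (by decide)))
          (Finset.mem_image_of_mem _ (hc 1).1) ?_
        rw [h]
        exact Finset.mem_image_of_mem _ (hc' 1 2 (by decide))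
      have C13 : (v 1).1 ≠ (v 3).1 := by
        intro h
        apply hHgirth 2 le_rfl (by norm_num)
        refine berge_two H (v 1).1 (v 2).1 ((e 1).image Prod.fst) ((e 2).image Prod.fst)
          (A 1 2 (by decide)) (B 1 2 (by decide)) ((hsub _ (heG 1)).2) ((hsub _ (heG 2)).2)
          (Finset.mem_image_of_mem _ (hc 1).1) (Finset.mem_image_of_mem _ (hc' 1 2 (by decide)))
          (Finset.mem_image_of_mem _ (hc 2).1) ?_
        rw [h]
        exact Finset.mem_image_of_mem _ (hc' 2 3 (by decide))
      -- opposite projected edges are distinct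
      have D02 : (e 0).image Prod.fst ≠ (e 2).image Prod.fst := by
        intro h
        apply hHgirth 2 le_rfl (by norm_num)
        refine berge_two H (v 1).1 (v 2).1 ((e 1).image Prod.fst) ((e 0).image Prod.fst)
          (A 1 2 (by decide)) (Ne.symm (B 0 1 (by decide))) ((hsub _ (heG 1)).2)
          ((hsub _ (heG 0)).2)
          (Finset.mem_image_of_mem _ (hc 1).1) (Finset.mem_image_of_mem _ (hc' 1 2 (by decide)))
          ?_ (Finset.mem_image_of_mem _ (hc' 0 1 (by decide)))
        rw [h]
        exact Finset.mem_image_of_mem _ (hc 2).1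
      have D13 : (e 1).image Prod.fst ≠ (e 3).image Prod.fst := by
        intro h
        apply hHgirth 2 le_rfl (by norm_num)
        refine berge_two H (v 2).1 (v 3).1 ((e 2).image Prod.fst) ((e 1).image Prod.fst)
          (A 2 3 (by decide)) (Ne.symm (B 1 2 (by decide))) ((hsub _ (heG 2)).2)
          ((hsub _ (heG 1)).2)
          (Finset.mem_image_of_mem _ (hc 2).1) (Finset.mem_image_of_mem _ (hc' 2 3 (by decide)))
          ?_ (Finset.mem_image_of_mem _ (hc' 1 2 (by decide)))
        rw [h]
        exact Finset.mem_image_of_mem _ (hc 3).1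
      apply hHgirth 4 (by norm_num) le_rfl
      refine ⟨fun i => (v i).1, fun i => (e i).image Prod.fst, ?_, ?_,
        fun i => (hsub _ (heG i)).2,
        fun i => ⟨Finset.mem_image_of_mem _ (hc i).1, Finset.mem_image_of_mem _ (hc i).2⟩⟩
      · intro i j hij
        change (v i).1 = (v j).1 at hij
        by_contra hne
        have enum : ∀ x : ZMod 4, x = 0 ∨ x = 1 ∨ x = 2 ∨ x = 3 := by decide
        rcases enum i with rfl | rfl | rfl | rfl <;> rcases enum j with rfl | rfl | rfl | rfl <;>
          first
          | exact hne rfl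
          | exact A _ _ (by decide) hij
          | exact A _ _ (by decide) hij.symm
          | exact C02 hij
          | exact C02 hij.symm
          | exact C13 hij
          | exact C13 hij.symm
      · intro i j hij
        change (e i).image Prod.fst = (e j).image Prod.fst at hij
        by_contra hne
        have enum : ∀ x : ZMod 4, x = 0 ∨ x = 1 ∨ x = 2 ∨ x = 3 := by decide
        rcases enum i with rfl | rfl | rfl | rfl <;> rcases enum j with rfl | rfl | rfl | rfl <;>
          first
          | exact hne rfl
          | exact B _ _ (by decide) hij
          | exact B _ _ (by decide) hij.symm
          | exact D02 hij
          | exact D02 hij.symm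
          | exact D13 hij
          | exact D13 hij.symm
  refine ⟨main, ?_⟩
  rintro ⟨f, hfG, hfinj, hcard, hdisj⟩
  apply main 4 (by norm_num) le_rfl
  have hex : ∀ i : ZMod 4, ∃ x, x ∈ f i ∩ f (i + 1) := by
    intro i
    exact Finset.card_pos.mp (by rw [hcard i]; norm_num)
  choose c hcm using hex
  have hcm1 : ∀ i, c i ∈ f i := fun i => (Finset.mem_inter.mp (hcm i)).1
  have hcm2 : ∀ i, c i ∈ f (i + 1) := fun i => (Finset.mem_inter.mp (hcm i)).2
  refine ⟨c, fun i => f (i + 1), ?_, ?_, fun i => hfG (i + 1), fun i => ⟨hcm2 i, hcm1 (i + 1)⟩⟩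
  · intro i j hij
    by_contra hne
    have enum : ∀ x : ZMod 4, x = 0 ∨ x = 1 ∨ x = 2 ∨ x = 3 := by decide
    have mem4 : ∀ p q : ZMod 4, q = p + 2 → c j ∈ f p → c j ∈ f q → False := by
      intro p q hq hp hqq
      exact (Finset.disjoint_left.mp (hq ▸ hdisj p) hp) hqq
    have hi1 : c j ∈ f i := hij ▸ hcm1 i
    have hi2 : c j ∈ f (i + 1) := hij ▸ hcm2 i
    have hj1 : c j ∈ f j := hcm1 j
    have hj2 : c j ∈ f (j + 1) := hcm2 j
    rcases enum i with rfl | rfl | rfl | rfl <;> rcases enum j with rfl | rfl | rfl | rfl <;>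
      first
      | exact hne rfl
      | exact mem4 _ _ (by decide) hi1 hj2
      | exact mem4 _ _ (by decide) hj2 hi1
      | exact mem4 _ _ (by decide) hi2 hj2
      | exact mem4 _ _ (by decide) hj2 hi2
      | exact mem4 _ _ (by decide) hi1 hj1
      | exact mem4 _ _ (by decide) hj1 hi1
      | exact mem4 _ _ (by decide) hi2 hj1
      | exact mem4 _ _ (by decide) hj1 hi2
  · intro i j hij
    have := hfinj hij
    exact add_right_cancel this
end
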